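/- Let k > j ≥ 0 be integers and L > 0 a real number. Let ℓ_1, …, ℓ_k be positive real numbers with ℓ_1 + ⋯ + ℓ_k ≤ L, and let λ_1, …, λ_k be real numbers such that λ_i ≥ π²/(4ℓ_i²) for all 1 ≤ i ≤ k and, in addition, λ_i ≥ π²/ℓ_i² for all j < i ≤ k. Then (1/k)·(λ_1 + ⋯ + λ_k) ≥ (π²/(4kL²))·( k³ + 3(k−j)³ ). -/

import Mathlib

open Real Finset

lemma cube_card_le {ι : Type*} (s : Finset ι) (ℓ : ι → ℝ) (h : ∀ i ∈ s, 0 < ℓ i)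
    (L : ℝ) (hL : 0 < L) (hs : ∑ i ∈ s, ℓ i ≤ L) :
    (s.card : ℝ) ^ 3 / L ^ 2 ≤ ∑ i ∈ s, 1 / ℓ i ^ 2 := by
  rcases s.eq_empty_or_nonempty with rfl | hne
  · simp
  have hS : 0 < ∑ i ∈ s, ℓ i := Finset.sum_pos h hne
  have H1 : (s.card : ℝ) ^ 2 / (∑ i ∈ s, ℓ i) ≤ ∑ i ∈ s, 1 / ℓ i := by
    have := sq_sum_div_le_sum_sq_div s (fun _ => (1 : ℝ)) h
    simpa using this
  have H2 : (∑ i ∈ s, 1 / ℓ i) ^ 2 ≤ (s.card : ℝ) * ∑ i ∈ s, 1 / ℓ i ^ 2 := by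
    have := sq_sum_le_card_mul_sum_sq (s := s) (f := fun i => 1 / ℓ i)
    simpa [div_pow] using this
  have hT : 0 ≤ ∑ i ∈ s, 1 / ℓ i ^ 2 :=
    Finset.sum_nonneg fun i hi => by positivity
  have hA : 0 ≤ ∑ i ∈ s, 1 / ℓ i :=
    Finset.sum_nonneg fun i hi => one_div_nonneg.2 (h i hi).le
  have hc : 0 < (s.card : ℝ) := by exact_mod_cast hne.card_pos
  rw [div_le_iff₀ (by positivity)]
  have key : (s.card : ℝ) ^ 3 ≤ (∑ i ∈ s, ℓ i) ^ 2 * ∑ i ∈ s, 1 / ℓ i ^ 2 := by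
    have h1' : (s.card : ℝ) ^ 2 ≤ (∑ i ∈ s, 1 / ℓ i) * ∑ i ∈ s, ℓ i := by
      rwa [div_le_iff₀ hS] at H1
    have h4 : ((s.card : ℝ) ^ 2) * ((s.card : ℝ) ^ 2)
        ≤ ((∑ i ∈ s, 1 / ℓ i) * ∑ i ∈ s, ℓ i) * ((∑ i ∈ s, 1 / ℓ i) * ∑ i ∈ s, ℓ i) :=
      mul_le_mul h1' h1' (by positivity) (mul_nonneg hA hS.le)
    have h5 : (∑ i ∈ s, 1 / ℓ i) ^ 2 * (∑ i ∈ s, ℓ i) ^ 2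
        ≤ ((s.card : ℝ) * ∑ i ∈ s, 1 / ℓ i ^ 2) * (∑ i ∈ s, ℓ i) ^ 2 :=
      mul_le_mul_of_nonneg_right H2 (sq_nonneg _)
    nlinarith [h4, h5, hc, hS]
  calc (s.card : ℝ) ^ 3 ≤ (∑ i ∈ s, ℓ i) ^ 2 * ∑ i ∈ s, 1 / ℓ i ^ 2 := key
    _ ≤ L ^ 2 * ∑ i ∈ s, 1 / ℓ i ^ 2 := by gcongr
    _ = (∑ i ∈ s, 1 / ℓ i ^ 2) * L ^ 2 := mul_comm _ _

/-- Analytic core of Theorem 4.2: if `ℓ_1 + ⋯ + ℓ_k ≤ L`, `λ_i ≥ π²/(4ℓ_i²)` for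
all `i`, and `λ_i ≥ π²/ℓ_i²` for the last `k−j` indices, then
`(1/k)·∑ λ_i ≥ (π²/(4kL²))(k³ + 3(k−j)³)`. -/
theorem stmt13 (k j : ℕ) (hj : j < k) (L : ℝ) (hL : 0 < L)
    (ℓ lam : Fin k → ℝ) (hℓ : ∀ i, 0 < ℓ i)
    (hsum : ∑ i, ℓ i ≤ L)
    (h1 : ∀ i, π ^ 2 / (4 * ℓ i ^ 2) ≤ lam i)
    (h2 : ∀ i : Fin k, j ≤ (i : ℕ) → π ^ 2 / ℓ i ^ 2 ≤ lam i) :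
    (π ^ 2 / (4 * (k : ℝ) * L ^ 2)) * ((k : ℝ) ^ 3 + 3 * ((k : ℝ) - (j : ℝ)) ^ 3)
      ≤ (1 / (k : ℝ)) * ∑ i, lam i := by
  have hk : 0 < k := j.zero_le.trans_lt hj
  have hkR : (0 : ℝ) < k := by exact_mod_cast hk
  set S : Finset (Fin k) := univ.filter (fun i => j ≤ (i : ℕ)) with hSdef
  have hScard : (S.card : ℝ) = (k : ℝ) - (j : ℝ) := by
    have : S = Ici (⟨j, hj⟩ : Fin k) := by
      ext i; simp [hSdef, Fin.le_def]
    rw [this, Fin.card_Ici]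
    push_cast [Nat.cast_sub hj.le]
    ring
  have hπ : (0:ℝ) ≤ π ^ 2 := sq_nonneg _
  -- pointwise bound
  have hpt : ∀ i, π ^ 2 / 4 * (1 / ℓ i ^ 2)
      + (if j ≤ (i : ℕ) then 3 * π ^ 2 / 4 * (1 / ℓ i ^ 2) else 0) ≤ lam i := by
    intro i
    by_cases hi : j ≤ (i : ℕ)
    · simp only [hi, if_true]
      refine le_trans (le_of_eq ?_) (h2 i hi)
      have := (hℓ i).ne'
      field_simp
      ring
    · simp only [hi, if_false, add_zero]
      refine le_trans (le_of_eq ?_) (h1 i)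
      rw [div_mul_eq_mul_div, mul_one_div, div_div, mul_comm (ℓ i ^ 2) 4]
  have hsum1 : (k : ℝ) ^ 3 / L ^ 2 ≤ ∑ i, 1 / ℓ i ^ 2 := by
    have := cube_card_le univ ℓ (fun i _ => hℓ i) L hL hsum
    simpa using this
  have hsum2 : ((k : ℝ) - (j : ℝ)) ^ 3 / L ^ 2 ≤ ∑ i ∈ S, 1 / ℓ i ^ 2 := by
    have hsub : ∑ i ∈ S, ℓ i ≤ L :=
      le_trans (Finset.sum_le_sum_of_subset_of_nonneg (Finset.subset_univ S)
        (fun i _ _ => (hℓ i).le)) hsum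
    have := cube_card_le S ℓ (fun i _ => hℓ i) L hL hsub
    rwa [hScard] at this
  have main : π ^ 2 / (4 * L ^ 2) * ((k : ℝ) ^ 3 + 3 * ((k : ℝ) - (j : ℝ)) ^ 3)
      ≤ ∑ i, lam i := by
    calc π ^ 2 / (4 * L ^ 2) * ((k : ℝ) ^ 3 + 3 * ((k : ℝ) - (j : ℝ)) ^ 3)
        = π ^ 2 / 4 * ((k : ℝ) ^ 3 / L ^ 2)
          + 3 * π ^ 2 / 4 * (((k : ℝ) - (j : ℝ)) ^ 3 / L ^ 2) := by
          field_simp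
      _ ≤ π ^ 2 / 4 * ∑ i, 1 / ℓ i ^ 2
          + 3 * π ^ 2 / 4 * ∑ i ∈ S, 1 / ℓ i ^ 2 := by gcongr <;> positivity

      _ = ∑ i, (π ^ 2 / 4 * (1 / ℓ i ^ 2)
          + (if j ≤ (i : ℕ) then 3 * π ^ 2 / 4 * (1 / ℓ i ^ 2) else 0)) := by
          rw [Finset.sum_add_distrib, Finset.mul_sum, ← Finset.sum_filter, Finset.mul_sum]
      _ ≤ ∑ i, lam i := Finset.sum_le_sum fun i _ => hpt i
  have hfac : π ^ 2 / (4 * (k : ℝ) * L ^ 2) = (1 / (k : ℝ)) * (π ^ 2 / (4 * L ^ 2)) := by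
    rw [one_div, ← div_div]
    congr 1
    rw [div_div]
    ring_nf
  rw [hfac, mul_assoc]
  gcongr
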